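/- Let Q be symmetric with λ_Q = λ_min(Q) < 0, g ∈ ℝⁿ, h(y) = yᵀQy + 2gᵀy and f(y) = yᵀ(Q − λ_Q I)y + 2gᵀy + λ_Q. Then f is convex on ℝⁿ and f(y) ≤ h(y) for every y with ‖y‖ ≤ 1, with equality f(y) = h(y) if and only if ‖y‖ = 1. -/

import Mathlib

open Matrix

theorem convex_underestimator {n : ℕ} (Q : Matrix (Fin n) (Fin n) ℝ)
    (g : EuclideanSpace ℝ (Fin n)) (lamQ : ℝ)
    (hQ : Q.IsSymm)
    (hlb : ∀ y : EuclideanSpace ℝ (Fin n), lamQ * ‖y‖ ^ 2 ≤ y ⬝ᵥ Q.mulVec y)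
    (hev : ∃ v : EuclideanSpace ℝ (Fin n), v ≠ 0 ∧ Q.mulVec v = lamQ • (v : Fin n → ℝ))
    (hneg : lamQ < 0)
    (h f : EuclideanSpace ℝ (Fin n) → ℝ)
    (hh : ∀ y, h y = y ⬝ᵥ Q.mulVec y + 2 * (g ⬝ᵥ y))
    (hf : ∀ y, f y = y ⬝ᵥ (Q - lamQ • (1 : Matrix (Fin n) (Fin n) ℝ)).mulVec y
        + 2 * (g ⬝ᵥ y) + lamQ) :
    ConvexOn ℝ Set.univ f ∧
      ∀ y : EuclideanSpace ℝ (Fin n), ‖y‖ ≤ 1 →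
        f y ≤ h y ∧ (f y = h y ↔ ‖y‖ = 1) := by
  set M : Matrix (Fin n) (Fin n) ℝ := Q - lamQ • (1 : Matrix (Fin n) (Fin n) ℝ) with hM
  have hMsymm : Mᵀ = M := by
    rw [hM, transpose_sub, transpose_smul, transpose_one, hQ]
  have hsym : ∀ x y : Fin n → ℝ, x ⬝ᵥ M *ᵥ y = y ⬝ᵥ M *ᵥ x := by
    intro x y
    rw [dotProduct_mulVec, ← mulVec_transpose, hMsymm, dotProduct_comm]
  have hnorm : ∀ y : EuclideanSpace ℝ (Fin n), (y : Fin n → ℝ) ⬝ᵥ y = ‖y‖ ^ 2 := by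
    intro y
    rw [← real_inner_self_eq_norm_sq]
    simp [PiLp.inner_apply, dotProduct, RCLike.inner_apply, mul_comm]
    rw [EuclideanSpace.norm_eq, Real.sq_sqrt (Finset.sum_nonneg fun i _ => sq_nonneg _)]
    simp [Real.norm_eq_abs, sq_abs, sq]
  have hexp : ∀ y : EuclideanSpace ℝ (Fin n),
      y ⬝ᵥ M *ᵥ y = y ⬝ᵥ Q *ᵥ y - lamQ * ‖y‖ ^ 2 := by
    intro y
    rw [hM, sub_mulVec, dotProduct_sub, smul_mulVec, one_mulVec,
      dotProduct_smul, smul_eq_mul, hnorm]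
  have hMpsd : ∀ y : EuclideanSpace ℝ (Fin n), 0 ≤ y ⬝ᵥ M *ᵥ y := by
    intro y
    rw [hexp]
    linarith [hlb y]
  constructor
  · refine ⟨convex_univ, ?_⟩
    intro x _ y _ a b ha hb hab
    have hxy : (0:ℝ) ≤ (x ⬝ᵥ M *ᵥ x) - 2 * (x ⬝ᵥ M *ᵥ y) + (y ⬝ᵥ M *ᵥ y) := by
      have h0 := hMpsd (x - y)
      have : ((x - y : EuclideanSpace ℝ (Fin n)) : Fin n → ℝ) ⬝ᵥ M *ᵥ ((x - y : EuclideanSpace ℝ (Fin n)) : Fin n → ℝ)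
          = (x ⬝ᵥ M *ᵥ x) - 2 * (x ⬝ᵥ M *ᵥ y) + (y ⬝ᵥ M *ᵥ y) := by
        show (x.ofLp - y.ofLp) ⬝ᵥ M *ᵥ (x.ofLp - y.ofLp) = _
        rw [mulVec_sub, sub_dotProduct, dotProduct_sub, dotProduct_sub, hsym y x]
        ring
      linarith [this ▸ h0]
    have e1 : ((a • x + b • y : EuclideanSpace ℝ (Fin n)) : Fin n → ℝ) ⬝ᵥ
        M *ᵥ ((a • x + b • y : EuclideanSpace ℝ (Fin n)) : Fin n → ℝ)
        = a^2 * (x ⬝ᵥ M *ᵥ x) + 2*a*b*(x ⬝ᵥ M *ᵥ y) + b^2 * (y ⬝ᵥ M *ᵥ y) := by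
      show (a • x.ofLp + b • y.ofLp) ⬝ᵥ M *ᵥ (a • x.ofLp + b • y.ofLp) = _
      rw [mulVec_add, mulVec_smul, mulVec_smul, add_dotProduct, smul_dotProduct,
        smul_dotProduct, dotProduct_add, dotProduct_add, dotProduct_smul,
        dotProduct_smul, dotProduct_smul, dotProduct_smul, hsym y x]
      simp only [smul_eq_mul]
      ring
    have e2 : g ⬝ᵥ ((a • x + b • y : EuclideanSpace ℝ (Fin n)) : Fin n → ℝ)
        = a * (g ⬝ᵥ x) + b * (g ⬝ᵥ y) := by
      show g.ofLp ⬝ᵥ (a • x.ofLp + b • y.ofLp) = _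
      rw [dotProduct_add, dotProduct_smul, dotProduct_smul]
      simp [smul_eq_mul]
    rw [hf, hf, hf, e1, e2, smul_eq_mul, smul_eq_mul]
    obtain rfl : b = 1 - a := by linarith
    nlinarith [mul_nonneg (mul_nonneg ha hb) hxy]
  · intro y hy
    have hkey : f y = h y + lamQ * (1 - ‖y‖ ^ 2) := by
      rw [hf, hh, hexp]
      ring
    have hn0 : (0:ℝ) ≤ ‖y‖ := norm_nonneg y
    have hsq : ‖y‖ ^ 2 ≤ 1 := by nlinarith
    constructor
    · nlinarith
    · constructor
      · intro hfy
        have : lamQ * (1 - ‖y‖ ^ 2) = 0 := by linarith [hkey ▸ hfy]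
        have h1 : 1 - ‖y‖ ^ 2 = 0 := by
          rcases mul_eq_zero.mp this with h' | h'
          · exact absurd h' (ne_of_lt hneg)
          · exact h'
        nlinarith
      · intro hny
        rw [hkey, hny]
        ring
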